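/- For any integer k ≥ 2 and any pair of finitely supported functions f, g : G → ℂ on an abelian group, ‖f+g‖_{E_k} ≤ ‖|f|‖_{E_k} + ‖|g|‖_{E_k}, where ‖h‖_{E_k} := (Σ_x ((h∘h)(x))^k)^{1/(2k)} with (h₁∘h₂)(x) := Σ_y \overline{h₁(y)} h₂(y+x). In particular, restricted to real-valued functions with k even, ‖·‖_{E_k} is a norm. -/

import Mathlib

open Finset

/-- Correlation with conjugation: `(h₁ ∘ h₂)(x) = Σ_y conj(h₁(y)) h₂(y + x)`. -/
noncomputable def corrC {G : Type*} [AddCommGroup G] (h₁ h₂ : G → ℂ) : G → ℂ :=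
  fun x => ∑ᶠ y : G, (starRingEnd ℂ) (h₁ y) * h₂ (y + x)

/-- `‖h‖_{E_k} = (Σ_x ((h∘h)(x))^k)^{1/(2k)}` (the sum is a nonnegative real;
we take its absolute value to land in `ℝ`). -/
noncomputable def normEkC {G : Type*} [AddCommGroup G] (k : ℕ) (h : G → ℂ) : ℝ :=
  ‖∑ᶠ x : G, (corrC h h x) ^ k‖ ^ ((1 : ℝ) / (2 * k))

open Function Pointwise


section Core
variable {G : Type*} [AddCommGroup G] [DecidableEq G]

noncomputable def corS (s : Finset G) (a b : G → ℝ) : G → ℝ := fun x => ∑ y ∈ s, a y * b (y + x)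

def diagSub (k : ℕ) : AddSubgroup (Fin k → G) where
  carrier := Set.range (fun d : G => (fun _ : Fin k => d))
  add_mem' := by rintro _ _ ⟨a, rfl⟩ ⟨b, rfl⟩; exact ⟨a + b, rfl⟩
  zero_mem' := ⟨0, rfl⟩
  neg_mem' := by rintro _ ⟨a, rfl⟩; exact ⟨-a, rfl⟩

lemma claimB (k : ℕ) [DecidableEq ((Fin k → G) ⧸ diagSub k)] (hk : 0 < k) (s : Finset G)
    (ψ : (Fin k → G) → ℝ)
    (hψ : ∀ z, ψ z ≠ 0 → z ∈ Fintype.piFinset fun _ : Fin k => s)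
    (y : Fin k → G) (hy : y ∈ Fintype.piFinset fun _ : Fin k => s) :
    ∑ z ∈ (Fintype.piFinset fun _ : Fin k => s).filter
        (fun z => (QuotientAddGroup.mk z : (Fin k → G) ⧸ diagSub k) = QuotientAddGroup.mk y),
      ψ z
    = ∑ d ∈ s - s, ψ (y + fun _ => d) := by
  classical
  set i0 : Fin k := ⟨0, hk⟩ with hi0
  set T := Fintype.piFinset fun _ : Fin k => s with hT
  have key : ∀ z ∈ T.filter
      (fun z => (QuotientAddGroup.mk z : (Fin k → G) ⧸ diagSub k) = QuotientAddGroup.mk y),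
      (y + fun _ => z i0 - y i0) = z := by
    intro z hz
    rcases Finset.mem_filter.mp hz with ⟨hzT, hzq⟩
    have h1 : -z + y ∈ diagSub k := QuotientAddGroup.eq.mp hzq
    rcases h1 with ⟨d₀, hd₀⟩
    funext i
    have e1 := congrFun hd₀ i
    have e2 := congrFun hd₀ i0
    simp only [Pi.add_apply, Pi.neg_apply] at e1 e2 ⊢
    have h3 : z i0 - y i0 = -d₀ := by rw [e2]; abel
    have h4 : d₀ = -z i + y i := e1
    rw [h3, h4]; abel
  rw [← Finset.sum_filter_ne_zero, ← Finset.sum_filter_ne_zero (s := s - s)]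
  refine Finset.sum_nbij' (fun z => z i0 - y i0) (fun d => y + fun _ => d) ?_ ?_ ?_ ?_ ?_
  · intro z hz
    rcases Finset.mem_filter.mp hz with ⟨hz1, hz2⟩
    rcases Finset.mem_filter.mp hz1 with ⟨hzT, hzq⟩
    refine Finset.mem_filter.mpr ⟨?_, ?_⟩
    · exact Finset.sub_mem_sub (Fintype.mem_piFinset.mp hzT i0) (Fintype.mem_piFinset.mp hy i0)
    · rw [key z hz1]; exact hz2
  · intro d hd
    rcases Finset.mem_filter.mp hd with ⟨hd1, hd2⟩
    refine Finset.mem_filter.mpr ⟨Finset.mem_filter.mpr ⟨hψ _ hd2, ?_⟩, hd2⟩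
    refine QuotientAddGroup.eq.mpr ?_
    exact ⟨-d, by funext i; simp⟩
  · intro z hz
    exact key z (Finset.mem_filter.mp hz).1
  · intro d hd
    simp
  · intro z hz
    rw [key z (Finset.mem_filter.mp hz).1]
end Core

section LemA
variable {G : Type*} [AddCommGroup G] [DecidableEq G]

set_option maxHeartbeats 1000000 in
lemma lemA (k : ℕ) [DecidableEq ((Fin k → G) ⧸ diagSub k)] (hk : 0 < k) (s : Finset G)
    (h h' : Fin k → (G → ℝ))
    (hh' : ∀ i x, h' i x ≠ 0 → x ∈ s) :
    ∑ c ∈ (Fintype.piFinset fun _ : Fin k => s).image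
        (fun y => (QuotientAddGroup.mk y : (Fin k → G) ⧸ diagSub k)),
      (∑ y ∈ (Fintype.piFinset fun _ : Fin k => s).filter
          (fun y => (QuotientAddGroup.mk y : (Fin k → G) ⧸ diagSub k) = c), ∏ i, h i (y i))
      * (∑ y ∈ (Fintype.piFinset fun _ : Fin k => s).filter
          (fun y => (QuotientAddGroup.mk y : (Fin k → G) ⧸ diagSub k) = c), ∏ i, h' i (y i))
    = ∑ d ∈ s - s, ∏ i, corS s (h i) (h' i) d := by
  classical
  set T := Fintype.piFinset fun _ : Fin k => s with hT
  have hψ : ∀ z, (∏ i, h' i (z i)) ≠ 0 → z ∈ T := by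
    intro z hz
    rw [Finset.prod_ne_zero_iff] at hz
    exact Fintype.mem_piFinset.mpr fun i => hh' i _ (hz i (Finset.mem_univ i))
  calc
    ∑ c ∈ T.image (fun y => (QuotientAddGroup.mk y : (Fin k → G) ⧸ diagSub k)),
        (∑ y ∈ T.filter
            (fun y => (QuotientAddGroup.mk y : (Fin k → G) ⧸ diagSub k) = c), ∏ i, h i (y i))
        * (∑ y ∈ T.filter
            (fun y => (QuotientAddGroup.mk y : (Fin k → G) ⧸ diagSub k) = c), ∏ i, h' i (y i))
      = ∑ c ∈ T.image (fun y => (QuotientAddGroup.mk y : (Fin k → G) ⧸ diagSub k)),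
          ∑ y ∈ T.filter
            (fun y => (QuotientAddGroup.mk y : (Fin k → G) ⧸ diagSub k) = c),
            ((∏ i, h i (y i)) * ∑ d ∈ s - s, ∏ i, h' i (y i + d)) := by
        refine Finset.sum_congr rfl fun c hc => ?_
        rw [Finset.sum_mul]
        refine Finset.sum_congr rfl fun y hy => ?_
        rcases Finset.mem_filter.mp hy with ⟨hyT, hyq⟩
        congr 1
        rw [← hyq]
        exact claimB k hk s _ hψ y hyT
    _ = ∑ y ∈ T, ((∏ i, h i (y i)) * ∑ d ∈ s - s, ∏ i, h' i (y i + d)) :=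
        Finset.sum_fiberwise_of_maps_to (fun y hy => Finset.mem_image_of_mem _ hy) _
    _ = ∑ d ∈ s - s, ∑ y ∈ T, ((∏ i, h i (y i)) * ∏ i, h' i (y i + d)) := by
        simp_rw [Finset.mul_sum]; exact Finset.sum_comm
    _ = ∑ d ∈ s - s, ∏ i, corS s (h i) (h' i) d := by
        refine Finset.sum_congr rfl fun d hd => ?_
        simp_rw [← Finset.prod_mul_distrib]
        rw [hT]
        exact Finset.sum_prod_piFinset s fun i z => h i z * h' i (z + d)
end LemA
section CoreIneq
variable {G : Type*} [AddCommGroup G] [DecidableEq G]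

set_option maxHeartbeats 1600000 in
lemma coreIneq (k : ℕ) [DecidableEq ((Fin k → G) ⧸ diagSub k)] (hk : 2 ≤ k) (s : Finset G)
    (u v : G → ℝ) (hus : ∀ x, u x ≠ 0 → x ∈ s) (hvs : ∀ x, v x ≠ 0 → x ∈ s)
    (hau : ∀ x, |corS s u u x| ^ k = corS s u u x ^ k)
    (hav : ∀ x, |corS s v v x| ^ k = corS s v v x ^ k) :
    ∑ d ∈ s - s, corS s (fun t => u t + v t) (fun t => u t + v t) d ^ k
      ≤ ((∑ d ∈ s - s, corS s u u d ^ k) ^ ((1:ℝ)/(2*(k:ℝ)))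
          + (∑ d ∈ s - s, corS s v v d ^ k) ^ ((1:ℝ)/(2*(k:ℝ)))) ^ (2*k) := by
  classical
  have hk0 : 0 < k := by omega
  have hkR : (k:ℝ) ≠ 0 := Nat.cast_ne_zero.mpr (by omega)
  set A := ∑ d ∈ s - s, corS s u u d ^ k with hA
  set B := ∑ d ∈ s - s, corS s v v d ^ k with hB
  have hA0 : 0 ≤ A := Finset.sum_nonneg fun d _ => by rw [← hau]; positivity
  have hB0 : 0 ≤ B := Finset.sum_nonneg fun d _ => by rw [← hav]; positivity
  set a := A ^ ((1:ℝ)/(2*(k:ℝ))) with ha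
  set b := B ^ ((1:ℝ)/(2*(k:ℝ))) with hb
  have ha0 : 0 ≤ a := Real.rpow_nonneg hA0 _
  have hb0 : 0 ≤ b := Real.rpow_nonneg hB0 _
  have hapow : ∀ (X : ℝ), 0 ≤ X → ∀ t : ℕ,
      (X ^ ((1:ℝ)/(2*(k:ℝ)))) ^ (2*t) = X ^ ((t:ℝ)/(k:ℝ)) := by
    intro X hX t
    rw [← Real.rpow_natCast (X ^ ((1:ℝ)/(2*(k:ℝ)))) (2*t), ← Real.rpow_mul hX]
    congr 1
    push_cast
    field_simp
  have haA : a ^ (2*k) = A := by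
    rw [ha, hapow A hA0 k, div_self hkR, Real.rpow_one]
  have hbB : b ^ (2*k) = B := by
    rw [hb, hapow B hB0 k, div_self hkR, Real.rpow_one]
  -- Hölder step
  have holder : ∀ t : ℕ, t ≤ k →
      ∑ d ∈ s - s, corS s u u d ^ t * corS s v v d ^ (k - t)
        ≤ a ^ (2*t) * b ^ (2*(k-t)) := by
    intro t ht
    rcases Nat.eq_zero_or_pos t with rfl | ht0
    · simp only [pow_zero, one_mul, Nat.sub_zero, mul_zero]
      exact le_of_eq (by rw [hbB, hB])
    by_cases htk : t = k
    · subst htk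
      simp only [Nat.sub_self, pow_zero, mul_one, mul_zero]
      exact le_of_eq (by rw [haA, hA])
    have ht1 : t < k := lt_of_le_of_ne ht htk
    have htR : (0:ℝ) < (t:ℝ) := by exact_mod_cast ht0
    have hktR : (0:ℝ) < (k:ℝ) - (t:ℝ) := by
      have : (t:ℝ) < (k:ℝ) := by exact_mod_cast ht1
      linarith
    set p := (k:ℝ)/(t:ℝ) with hp
    set q := (k:ℝ)/((k:ℝ)-(t:ℝ)) with hq
    have hpq : p.HolderConjugate q := by
      rw [Real.holderConjugate_iff]
      constructor
      · rw [hp, lt_div_iff₀ htR, one_mul]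
        exact_mod_cast ht1
      · rw [hp, hq]
        field_simp
        ring
    have CS := Real.inner_le_Lp_mul_Lq (s - s) (fun d => corS s u u d ^ t)
        (fun d => corS s v v d ^ (k - t)) hpq
    have e1 : ∀ d : G, |corS s u u d ^ t| ^ p = corS s u u d ^ k := by
      intro d
      rw [abs_pow, ← Real.rpow_natCast |corS s u u d| t, ← Real.rpow_mul (abs_nonneg _),
        show (t:ℝ) * p = (k:ℕ) by rw [hp]; push_cast; field_simp,
        Real.rpow_natCast, hau]
    have e2 : ∀ d : G, |corS s v v d ^ (k - t)| ^ q = corS s v v d ^ k := by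
      intro d
      rw [abs_pow, ← Real.rpow_natCast |corS s v v d| (k - t), ← Real.rpow_mul (abs_nonneg _),
        show ((k - t : ℕ):ℝ) * q = (k:ℕ) by
          rw [hq, Nat.cast_sub ht]; push_cast; field_simp,
        Real.rpow_natCast, hav]
    simp only [e1, e2] at CS
    refine le_trans CS (le_of_eq ?_)
    have f1 : A ^ (1/p) = a ^ (2*t) := by
      rw [hapow A hA0 t, hp, one_div_div]
    have f2 : B ^ (1/q) = b ^ (2*(k - t)) := by
      rw [hapow B hB0 (k - t), hq, one_div_div, Nat.cast_sub ht]
    rw [← hA, ← hB, f1, f2]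
  -- main expansion
  set T := Fintype.piFinset fun _ : Fin k => s with hT
  set π : (Fin k → G) → (Fin k → G) ⧸ diagSub k := QuotientAddGroup.mk with hπ
  have hws : ∀ x : G, (fun t => u t + v t) x ≠ 0 → x ∈ s := by
    intro x hx
    by_contra hxs
    have h1 : u x = 0 := by by_contra h; exact hxs (hus x h)
    have h2 : v x = 0 := by by_contra h; exact hxs (hvs x h)
    simp only [h1, h2, add_zero] at hx
    exact hx rfl
  have hQw := lemA (G := G) k hk0 s (fun _ => fun t => u t + v t)
      (fun _ => fun t => u t + v t) (fun _ => hws)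
  have hprodconst : ∀ d : G,
      (∏ _i : Fin k, corS s (fun t => u t + v t) (fun t => u t + v t) d)
        = corS s (fun t => u t + v t) (fun t => u t + v t) d ^ k := by
    intro d; rw [Finset.prod_const, Finset.card_univ, Fintype.card_fin]
  set SP : Finset (Fin k) → ((Fin k → G) ⧸ diagSub k) → ℝ := fun P c =>
    ∑ y ∈ T.filter (fun y => π y = c), (∏ i ∈ P, u (y i)) * ∏ i ∈ Finset.univ \ P, v (y i)
    with hSP
  set QQ : Finset (Fin k) → Finset (Fin k) → ℝ := fun P P' =>
    ∑ c ∈ T.image π, SP P c * SP P' c with hQQ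
  have expand : ∀ c : (Fin k → G) ⧸ diagSub k,
      (∑ y ∈ T.filter (fun y => π y = c), ∏ i, (u (y i) + v (y i)))
        = ∑ P ∈ (Finset.univ : Finset (Fin k)).powerset, SP P c := by
    intro c
    calc (∑ y ∈ T.filter (fun y => π y = c), ∏ i, (u (y i) + v (y i)))
        = ∑ y ∈ T.filter (fun y => π y = c),
            ∑ P ∈ (Finset.univ : Finset (Fin k)).powerset,
              (∏ i ∈ P, u (y i)) * ∏ i ∈ Finset.univ \ P, v (y i) :=
          Finset.sum_congr rfl fun y _ => Finset.prod_add _ _ _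
      _ = ∑ P ∈ (Finset.univ : Finset (Fin k)).powerset, SP P c := Finset.sum_comm
  have expandQ :
      (∑ c ∈ T.image π, (∑ y ∈ T.filter (fun y => π y = c), ∏ i, (u (y i) + v (y i)))
          * (∑ y ∈ T.filter (fun y => π y = c), ∏ i, (u (y i) + v (y i))))
        = ∑ P ∈ (Finset.univ : Finset (Fin k)).powerset,
            ∑ P' ∈ (Finset.univ : Finset (Fin k)).powerset, QQ P P' := by
    calc (∑ c ∈ T.image π, (∑ y ∈ T.filter (fun y => π y = c), ∏ i, (u (y i) + v (y i)))
          * (∑ y ∈ T.filter (fun y => π y = c), ∏ i, (u (y i) + v (y i))))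
        = ∑ c ∈ T.image π, ∑ P ∈ (Finset.univ : Finset (Fin k)).powerset,
            ∑ P' ∈ (Finset.univ : Finset (Fin k)).powerset, SP P c * SP P' c := by
          refine Finset.sum_congr rfl fun c _ => ?_
          rw [expand c, Finset.sum_mul_sum]
      _ = ∑ P ∈ (Finset.univ : Finset (Fin k)).powerset, ∑ c ∈ T.image π,
            ∑ P' ∈ (Finset.univ : Finset (Fin k)).powerset, SP P c * SP P' c :=
          Finset.sum_comm
      _ = ∑ P ∈ (Finset.univ : Finset (Fin k)).powerset,
            ∑ P' ∈ (Finset.univ : Finset (Fin k)).powerset, QQ P P' :=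
          Finset.sum_congr rfl fun P _ => Finset.sum_comm
  have phi_eq : ∀ (P : Finset (Fin k)) (y : Fin k → G),
      (∏ i, (if i ∈ P then u else v) (y i))
        = (∏ i ∈ P, u (y i)) * ∏ i ∈ Finset.univ \ P, v (y i) := by
    intro P y
    have h1 : ∀ i : Fin k, (if i ∈ P then u else v) (y i)
        = if i ∈ P then u (y i) else v (y i) := fun i => apply_ite (fun f => f (y i)) _ u v
    simp only [h1]
    rw [Finset.prod_ite]
    congr 1
    · exact Finset.prod_congr (Finset.filter_univ_mem P) fun _ _ => rfl
    · refine Finset.prod_congr ?_ fun _ _ => rfl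
      rw [Finset.filter_not, Finset.filter_univ_mem]
  have hQP : ∀ P : Finset (Fin k),
      QQ P P = ∑ d ∈ s - s, corS s u u d ^ P.card * corS s v v d ^ (k - P.card) := by
    intro P
    have hhP : ∀ (i : Fin k) (x : G), (if i ∈ P then u else v) x ≠ 0 → x ∈ s := by
      intro i x
      by_cases hi : i ∈ P
      · simp only [hi, if_true]; exact hus x
      · simp only [hi, if_false]; exact hvs x
    have h := lemA (G := G) k hk0 s (fun i => if i ∈ P then u else v)
        (fun i => if i ∈ P then u else v) hhP
    simp only [phi_eq] at h
    have hcor : ∀ (i : Fin k) (d : G),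
        corS s (if i ∈ P then u else v) (if i ∈ P then u else v) d
          = if i ∈ P then corS s u u d else corS s v v d := by
      intro i d; by_cases hi : i ∈ P <;> simp [hi]
    simp only [hcor] at h
    have hrhs : ∀ d : G, (∏ i : Fin k, if i ∈ P then corS s u u d else corS s v v d)
        = corS s u u d ^ P.card * corS s v v d ^ (k - P.card) := by
      intro d
      rw [Finset.prod_ite, Finset.prod_const, Finset.prod_const, Finset.filter_univ_mem,
        Finset.filter_not, Finset.filter_univ_mem, Finset.card_univ_diff, Fintype.card_fin]
    simp only [hrhs] at h
    exact h
  have hQ0 : ∀ P : Finset (Fin k), 0 ≤ QQ P P :=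
    fun P => Finset.sum_nonneg fun c _ => mul_self_nonneg _
  have hQdiag : ∀ P : Finset (Fin k),
      QQ P P ≤ (a ^ P.card * b ^ (k - P.card)) ^ 2 := by
    intro P
    have hcard : P.card ≤ k := by
      have := Finset.card_le_univ P
      simpa [Finset.card_univ, Fintype.card_fin] using this
    have h1 := holder P.card hcard
    rw [hQP P]
    refine le_trans h1 (le_of_eq ?_)
    rw [mul_pow, ← pow_mul, ← pow_mul, Nat.mul_comm P.card 2, Nat.mul_comm (k - P.card) 2]
  have cross : ∀ P P' : Finset (Fin k),
      QQ P P' ≤ (a ^ P.card * b ^ (k - P.card)) * (a ^ P'.card * b ^ (k - P'.card)) := by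
    intro P P'
    have hx0 : (0:ℝ) ≤ a ^ P.card * b ^ (k - P.card) := by positivity
    have hx0' : (0:ℝ) ≤ a ^ P'.card * b ^ (k - P'.card) := by positivity
    have h2 : ∀ P₀ : Finset (Fin k), QQ P₀ P₀ = ∑ c ∈ T.image π, SP P₀ c ^ 2 :=
      fun P₀ => Finset.sum_congr rfl fun c _ => (pow_two (SP P₀ c)).symm
    have hcs : (QQ P P') ^ 2 ≤ QQ P P * QQ P' P' := by
      rw [h2 P, h2 P']
      exact Finset.sum_mul_sq_le_sq_mul_sq _ _ _
    calc QQ P P' ≤ |QQ P P'| := le_abs_self _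
      _ = Real.sqrt ((QQ P P') ^ 2) := (Real.sqrt_sq_eq_abs _).symm
      _ ≤ Real.sqrt (QQ P P * QQ P' P') := Real.sqrt_le_sqrt hcs
      _ ≤ Real.sqrt (((a ^ P.card * b ^ (k - P.card)) ^ 2)
            * ((a ^ P'.card * b ^ (k - P'.card)) ^ 2)) :=
          Real.sqrt_le_sqrt (mul_le_mul (hQdiag P) (hQdiag P') (hQ0 P') (sq_nonneg _))
      _ = (a ^ P.card * b ^ (k - P.card)) * (a ^ P'.card * b ^ (k - P'.card)) := by
          rw [← mul_pow, Real.sqrt_sq (by positivity)]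
  have hXsum : ∑ P ∈ (Finset.univ : Finset (Fin k)).powerset, a ^ P.card * b ^ (k - P.card)
      = (a + b) ^ k := by
    have h1 : (a + b) ^ k = ∏ _i : Fin k, (a + b) := by
      rw [Finset.prod_const, Finset.card_univ, Fintype.card_fin]
    rw [h1, Finset.prod_add]
    refine Finset.sum_congr rfl fun P _ => ?_
    rw [Finset.prod_const, Finset.prod_const, Finset.card_univ_diff, Fintype.card_fin]
  have goal1 : ∑ d ∈ s - s, corS s (fun t => u t + v t) (fun t => u t + v t) d ^ k
      = ∑ P ∈ (Finset.univ : Finset (Fin k)).powerset,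
          ∑ P' ∈ (Finset.univ : Finset (Fin k)).powerset, QQ P P' :=
    ((Finset.sum_congr rfl fun d _ => (hprodconst d).symm).trans hQw.symm).trans expandQ
  rw [goal1]
  refine le_trans (Finset.sum_le_sum fun P _ => Finset.sum_le_sum fun P' _ => cross P P') ?_
  rw [← Finset.sum_mul_sum, hXsum, ← pow_add]
  exact le_of_eq (by rw [two_mul])

end CoreIneq


section Bridge
variable {G : Type*} [AddCommGroup G] [DecidableEq G]

lemma corrC_real (s : Finset G) (f g : G → ℝ) (hf : ∀ x, f x ≠ 0 → x ∈ s) (x : G) :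
    corrC (fun t => (f t : ℂ)) (fun t => (g t : ℂ)) x = ((corS s f g x : ℝ) : ℂ) := by
  unfold corrC corS
  have h1 : ∀ y : G, (starRingEnd ℂ) ((f y : ℝ) : ℂ) * ((g (y + x) : ℝ) : ℂ)
      = ((f y * g (y + x) : ℝ) : ℂ) := by
    intro y; rw [Complex.conj_ofReal]; push_cast; ring
  rw [finsum_congr h1]
  rw [finsum_eq_finset_sum_of_support_subset _ (s := s) ?hs]
  · push_cast; rfl
  · intro y hy
    simp only [Function.mem_support, ne_eq, Complex.ofReal_eq_zero] at hy
    exact hf y fun h => hy (by rw [h, zero_mul])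

lemma sum_corrC_real (k : ℕ) (hk : 0 < k) (s : Finset G) (f : G → ℝ) (hf : ∀ x, f x ≠ 0 → x ∈ s) :
    ∑ᶠ x : G, (corrC (fun t => (f t : ℂ)) (fun t => (f t : ℂ)) x) ^ k
      = ((∑ d ∈ s - s, corS s f f d ^ k : ℝ) : ℂ) := by
  have h1 : ∀ x : G, (corrC (fun t => (f t : ℂ)) (fun t => (f t : ℂ)) x) ^ k
      = ((corS s f f x ^ k : ℝ) : ℂ) := by
    intro x; rw [corrC_real s f f hf x]; push_cast; ring
  rw [finsum_congr h1]
  rw [finsum_eq_finset_sum_of_support_subset _ (s := s - s) ?hs]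
  · push_cast; rfl
  · intro x hx
    simp only [Function.mem_support, ne_eq, Complex.ofReal_eq_zero] at hx
    have hcor : corS s f f x ≠ 0 := fun h => hx (by rw [h, zero_pow (by omega)])
    obtain ⟨y, hy, hy0⟩ := Finset.exists_ne_zero_of_sum_ne_zero hcor
    have hfy : f y ≠ 0 := fun h => hy0 (by rw [h, zero_mul])
    have hfyx : f (y + x) ≠ 0 := fun h => hy0 (by rw [h, mul_zero])
    have hsub : (y + x) - y = x := by abel
    exact Finset.mem_coe.mpr (hsub ▸ Finset.sub_mem_sub (hf _ hfyx) (hf _ hfy))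

lemma normEk_real (k : ℕ) (hk : 0 < k) (s : Finset G) (f : G → ℝ)
    (hf : ∀ x, f x ≠ 0 → x ∈ s) :
    normEkC k (fun t => (f t : ℂ))
      = |∑ d ∈ s - s, corS s f f d ^ k| ^ ((1 : ℝ) / (2 * k)) := by
  unfold normEkC
  rw [sum_corrC_real k hk s f hf, Complex.norm_real, Real.norm_eq_abs]

lemma abs_sum_corrC_le (k : ℕ) (hk : 0 < k) (s : Finset G) (h : G → ℂ) (m : G → ℝ)
    (hh : ∀ x, h x ≠ 0 → x ∈ s) (hm : ∀ x, ‖h x‖ ≤ m x) :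
    ‖∑ᶠ x : G, (corrC h h x) ^ k‖ ≤ ∑ d ∈ s - s, corS s m m d ^ k := by
  have hm0 : ∀ x, 0 ≤ m x := fun x => le_trans (norm_nonneg _) (hm x)
  have hcor_eq : ∀ x : G, corrC h h x = ∑ y ∈ s, (starRingEnd ℂ) (h y) * h (y + x) := by
    intro x
    unfold corrC
    refine finsum_eq_finset_sum_of_support_subset _ ?_
    intro y hy
    simp only [Function.mem_support, ne_eq] at hy
    refine hh y fun hy0 => hy ?_
    rw [hy0, map_zero, zero_mul]
  have hcor_le : ∀ x : G, ‖corrC h h x‖ ≤ corS s m m x := by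
    intro x
    rw [hcor_eq x]
    refine le_trans (norm_sum_le _ _) (Finset.sum_le_sum fun y _ => ?_)
    rw [norm_mul, Complex.norm_conj]
    exact mul_le_mul (hm y) (hm _) (norm_nonneg _) (hm0 y)
  have hsupp : (Function.support fun x => (corrC h h x) ^ k) ⊆ (s - s : Finset G) := by
    intro x hx
    simp only [Function.mem_support, ne_eq] at hx
    have hc : corrC h h x ≠ 0 := fun h0 => hx (by rw [h0, zero_pow (by omega)])
    have hc2 : ∑ y ∈ s, (starRingEnd ℂ) (h y) * h (y + x) ≠ 0 := by
      rw [← hcor_eq x]; exact hc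
    obtain ⟨y, hy, hy0⟩ := Finset.exists_ne_zero_of_sum_ne_zero hc2
    have h1 : h (y + x) ≠ 0 := fun h0 => hy0 (by rw [h0, mul_zero])
    have h2 : h y ≠ 0 := fun h0 => hy0 (by rw [h0, map_zero, zero_mul])
    have hsub : (y + x) - y = x := by abel
    exact Finset.mem_coe.mpr (hsub ▸ Finset.sub_mem_sub (hh _ h1) (hh _ h2))
  rw [finsum_eq_finset_sum_of_support_subset _ hsupp]
  refine le_trans (norm_sum_le _ _) (Finset.sum_le_sum fun d _ => ?_)
  rw [norm_pow]
  exact pow_le_pow_left₀ (norm_nonneg _) (hcor_le d) k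

end Bridge

section Assemble
variable {G : Type*} [AddCommGroup G] [DecidableEq G]

lemma normEk_eq (k : ℕ) (hk : 0 < k) (s : Finset G) (f : G → ℝ)
    (hf : ∀ x, f x ≠ 0 → x ∈ s) (hterm : ∀ d : G, 0 ≤ corS s f f d ^ k) :
    normEkC k (fun t => (f t : ℂ))
      = (∑ d ∈ s - s, corS s f f d ^ k) ^ ((1 : ℝ) / (2 * k)) := by
  rw [normEk_real k hk s f hf, abs_of_nonneg (Finset.sum_nonneg fun d _ => hterm d)]

lemma rpow_chain (k : ℕ) (hk : 0 < k) (X c : ℝ) (hc : 0 ≤ c) (hX0 : 0 ≤ X)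
    (hX : X ≤ c ^ (2 * k)) : X ^ ((1 : ℝ) / (2 * k)) ≤ c := by
  have hkR : ((2 * k : ℕ) : ℝ) * ((1 : ℝ) / (2 * (k:ℝ))) = 1 := by
    push_cast
    field_simp
  calc X ^ ((1 : ℝ) / (2 * (k:ℝ))) ≤ (c ^ (2 * k)) ^ ((1 : ℝ) / (2 * (k:ℝ))) :=
        Real.rpow_le_rpow hX0 hX (by positivity)
    _ = c := by
        rw [← Real.rpow_natCast c (2 * k), ← Real.rpow_mul hc, hkR, Real.rpow_one]

end Assemble

theorem stmt_12 {G : Type*} [AddCommGroup G] (k : ℕ) (hk : 2 ≤ k) :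
    (∀ f g : G → ℂ, (Function.support f).Finite → (Function.support g).Finite →
        normEkC k (f + g)
          ≤ normEkC k (fun t => (‖f t‖ : ℂ))
            + normEkC k (fun t => (‖g t‖ : ℂ)))
    ∧ (Even k →
        (∀ f : G → ℝ, 0 ≤ normEkC k (fun t => (f t : ℂ)))
        ∧ (∀ f : G → ℝ, (Function.support f).Finite →
            (normEkC k (fun t => (f t : ℂ)) = 0 ↔ f = 0))
        ∧ (∀ (c : ℝ) (f : G → ℝ),
            normEkC k (fun t => ((c * f t : ℝ) : ℂ)) = |c| * normEkC k (fun t => (f t : ℂ)))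
        ∧ (∀ f g : G → ℝ, (Function.support f).Finite → (Function.support g).Finite →
            normEkC k (fun t => ((f t + g t : ℝ) : ℂ))
              ≤ normEkC k (fun t => (f t : ℂ)) + normEkC k (fun t => (g t : ℂ)))) := by
  classical
  have hk0 : 0 < k := by omega
  have hkne : k ≠ 0 := by omega
  have hexp : (0:ℝ) < (1 : ℝ) / (2 * (k:ℝ)) := by positivity
  constructor
  · -- part 1
    intro f g hf hg
    set s := hf.toFinset ∪ hg.toFinset with hs
    set u := fun t : G => ‖f t‖ with hu
    set v := fun t : G => ‖g t‖ with hv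
    have hus : ∀ x, u x ≠ 0 → x ∈ s := by
      intro x hx
      refine Finset.mem_union_left _ (hf.mem_toFinset.mpr ?_)
      simpa [hu, map_ne_zero] using hx
    have hvs : ∀ x, v x ≠ 0 → x ∈ s := by
      intro x hx
      refine Finset.mem_union_right _ (hg.mem_toFinset.mpr ?_)
      simpa [hv, map_ne_zero] using hx
    have hcorU : ∀ x, 0 ≤ corS s u u x := by
      intro x
      refine Finset.sum_nonneg fun y _ => mul_nonneg ?_ ?_ <;>
        simp [hu, norm_nonneg]
    have hcorV : ∀ x, 0 ≤ corS s v v x := by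
      intro x
      refine Finset.sum_nonneg fun y _ => mul_nonneg ?_ ?_ <;>
        simp [hv, norm_nonneg]
    have hau : ∀ x, |corS s u u x| ^ k = corS s u u x ^ k :=
      fun x => by rw [abs_of_nonneg (hcorU x)]
    have hav : ∀ x, |corS s v v x| ^ k = corS s v v x ^ k :=
      fun x => by rw [abs_of_nonneg (hcorV x)]
    have core := coreIneq (G := G) k hk s u v hus hvs hau hav
    have hh : ∀ x, (f + g) x ≠ 0 → x ∈ s := by
      intro x hx
      by_contra hxs
      have h1 : f x = 0 := by
        by_contra h1
        exact hxs (Finset.mem_union_left _ (hf.mem_toFinset.mpr h1))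
      have h2 : g x = 0 := by
        by_contra h2
        exact hxs (Finset.mem_union_right _ (hg.mem_toFinset.mpr h2))
      exact hx (by simp [h1, h2])
    have hm : ∀ x, ‖(f + g) x‖ ≤ (fun t => u t + v t) x :=
      fun x => norm_add_le (f x) (g x)
    have bound := abs_sum_corrC_le k hk0 s (f + g) (fun t => u t + v t) hh hm
    have hA0' : 0 ≤ ∑ d ∈ s - s, corS s u u d ^ k :=
      Finset.sum_nonneg fun d _ => by rw [← hau d]; positivity
    have hB0' : 0 ≤ ∑ d ∈ s - s, corS s v v d ^ k :=
      Finset.sum_nonneg fun d _ => by rw [← hav d]; positivity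
    rw [normEk_eq k hk0 s u hus (fun d => by rw [← hau d]; positivity),
      normEk_eq k hk0 s v hvs (fun d => by rw [← hav d]; positivity)]
    show (‖∑ᶠ x : G, (corrC (f + g) (f + g) x) ^ k‖) ^ ((1 : ℝ) / (2 * (k:ℝ))) ≤ _
    exact rpow_chain k hk0 _ _
      (add_nonneg (Real.rpow_nonneg hA0' _) (Real.rpow_nonneg hB0' _))
      (norm_nonneg _) (le_trans bound core)
  · -- part 2
    intro hke
    refine ⟨?_, ?_, ?_, ?_⟩
    · intro f
      exact Real.rpow_nonneg (norm_nonneg _) _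
    · -- definiteness
      intro f hf
      constructor
      · intro h0
        by_contra hne
        obtain ⟨t, ht⟩ : ∃ t, f t ≠ 0 := by
          by_contra hall
          push_neg at hall
          exact hne (funext hall)
        set s := hf.toFinset with hsdef
        have hfs : ∀ x, f x ≠ 0 → x ∈ s := fun x hx => hf.mem_toFinset.mpr hx
        rw [normEk_real k hk0 s f hfs] at h0
        have habs := (Real.rpow_eq_zero_iff_of_nonneg (abs_nonneg _)).mp h0
        have hZ : ∑ d ∈ s - s, corS s f f d ^ k = 0 := abs_eq_zero.mp habs.1
        have hterm := (Finset.sum_eq_zero_iff_of_nonneg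
          (fun d _ => hke.pow_nonneg (corS s f f d))).mp hZ
        have h0mem : (0:G) ∈ s - s :=
          Finset.mem_sub.mpr ⟨t, hfs t ht, t, hfs t ht, sub_self t⟩
        have hc0 : corS s f f 0 = 0 := by
          have := hterm 0 h0mem
          exact pow_eq_zero_iff hkne |>.mp this
        have hpos : 0 < corS s f f 0 := by
          refine Finset.sum_pos' (fun y _ => by rw [add_zero]; exact mul_self_nonneg _)
            ⟨t, hfs t ht, ?_⟩
          rw [add_zero]
          exact mul_self_pos.mpr ht
        exact absurd hc0 (ne_of_gt hpos)
      · rintro rfl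
        have h1 : (fun t : G => (((0 : G → ℝ) t : ℝ) : ℂ)) = fun _ : G => (0:ℂ) := by
          funext t; simp
        rw [h1]
        unfold normEkC corrC
        simp only [map_zero, zero_mul, finsum_zero, zero_pow hkne, norm_zero]
        exact Real.zero_rpow (ne_of_gt hexp)
    · -- homogeneity
      intro c f
      by_cases hc : c = 0
      · subst hc
        have h1 : (fun t : G => ((0 * f t : ℝ) : ℂ)) = fun _ : G => (0:ℂ) := by
          funext t; simp
        rw [h1]
        unfold normEkC corrC
        simp only [map_zero, zero_mul, finsum_zero, zero_pow hkne, norm_zero]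
        rw [Real.zero_rpow (ne_of_gt hexp), abs_zero, zero_mul]
      · have hcor : ∀ x : G, corrC (fun t => ((c * f t : ℝ) : ℂ)) (fun t => ((c * f t : ℝ) : ℂ)) x
            = ((c:ℂ)^2) * corrC (fun t => ((f t : ℝ) : ℂ)) (fun t => ((f t : ℝ) : ℂ)) x := by
          intro x
          unfold corrC
          rw [← smul_eq_mul, smul_finsum]
          refine finsum_congr fun y => ?_
          rw [smul_eq_mul, Complex.conj_ofReal, Complex.conj_ofReal]
          push_cast
          ring
        have hpow : ∀ x : G, (corrC (fun t => ((c * f t : ℝ) : ℂ)) (fun t => ((c * f t : ℝ) : ℂ)) x) ^ k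
            = ((c:ℂ)^(2*k)) * (corrC (fun t => ((f t : ℝ) : ℂ)) (fun t => ((f t : ℝ) : ℂ)) x) ^ k := by
          intro x
          rw [hcor x, mul_pow, ← pow_mul]
        have hsmul : ∑ᶠ x : G, ((c:ℂ)^(2*k))
              * (corrC (fun t => ((f t : ℝ) : ℂ)) (fun t => ((f t : ℝ) : ℂ)) x) ^ k
            = ((c:ℂ)^(2*k))
              * ∑ᶠ x : G, (corrC (fun t => ((f t : ℝ) : ℂ)) (fun t => ((f t : ℝ) : ℂ)) x) ^ k := by
          exact (smul_finsum ((c:ℂ)^(2*k)) _).symm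
        unfold normEkC
        rw [finsum_congr hpow, hsmul, norm_mul, norm_pow, Complex.norm_real, Real.norm_eq_abs]
        rw [Real.mul_rpow (by positivity) (norm_nonneg _)]
        congr 1
        rw [← Real.rpow_natCast |c| (2*k), ← Real.rpow_mul (abs_nonneg c),
          show ((2*k:ℕ):ℝ) * ((1:ℝ)/(2*(k:ℝ))) = 1 by push_cast; field_simp,
          Real.rpow_one]
    · -- triangle, real even
      intro f g hf hg
      set s := hf.toFinset ∪ hg.toFinset with hs
      have hfs : ∀ x, f x ≠ 0 → x ∈ s :=
        fun x hx => Finset.mem_union_left _ (hf.mem_toFinset.mpr hx)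
      have hgs : ∀ x, g x ≠ 0 → x ∈ s :=
        fun x hx => Finset.mem_union_right _ (hg.mem_toFinset.mpr hx)
      have hsum : ∀ x, (fun t => f t + g t) x ≠ 0 → x ∈ s := by
        intro x hx
        by_contra hxs
        have h1 : f x = 0 := by
          by_contra h1; exact hxs (hfs x h1)
        have h2 : g x = 0 := by
          by_contra h2; exact hxs (hgs x h2)
        exact hx (by simp [h1, h2])
      have hau : ∀ x, |corS s f f x| ^ k = corS s f f x ^ k :=
        fun x => hke.pow_abs _
      have hav : ∀ x, |corS s g g x| ^ k = corS s g g x ^ k :=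
        fun x => hke.pow_abs _
      have core := coreIneq (G := G) k hk s f g hfs hgs hau hav
      rw [normEk_eq k hk0 s (fun t => f t + g t) hsum (fun d => hke.pow_nonneg _),
        normEk_eq k hk0 s f hfs (fun d => hke.pow_nonneg _),
        normEk_eq k hk0 s g hgs (fun d => hke.pow_nonneg _)]
      exact rpow_chain k hk0 _ _
        (add_nonneg
          (Real.rpow_nonneg (Finset.sum_nonneg fun d _ => hke.pow_nonneg _) _)
          (Real.rpow_nonneg (Finset.sum_nonneg fun d _ => hke.pow_nonneg _) _))
        (Finset.sum_nonneg fun d _ => hke.pow_nonneg _) core
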